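/- Let F_1, …, F_N : ℝ^d → ℝ be differentiable functions whose gradients are L-Lipschitz (‖∇F_i(x) − ∇F_i(y)‖₂ ≤ L‖x − y‖₂ for all x, y), let π_1, …, π_N ≥ 0 with Σ_i π_i = 1, and let F = Σ_i π_i F_i. Then for all points w̄, w_1, …, w_N ∈ ℝ^d: ⟨∇F(w̄), −Σ_i π_i ∇F_i(w_i)⟩ ≤ −(1/2)‖∇F(w̄)‖₂² − (1/2)‖Σ_i π_i ∇F_i(w_i)‖₂² + (L²/2) Σ_i π_i ‖w̄ − w_i‖₂². -/

import Mathlib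

open Finset
open scoped RealInnerProductSpace

lemma grad_weighted_sum (d N : ℕ) (F : Fin N → EuclideanSpace ℝ (Fin d) → ℝ)
    (π : Fin N → ℝ) (hdiff : ∀ i, Differentiable ℝ (F i)) (x : EuclideanSpace ℝ (Fin d)) :
    gradient (fun z => ∑ i, π i * F i z) x = ∑ i, π i • gradient (F i) x := by
  have h : HasGradientAt (fun z => ∑ i, π i * F i z) (∑ i, π i • gradient (F i) x) x := by
    rw [hasGradientAt_iff_hasFDerivAt, map_sum]
    have : ∀ i ∈ Finset.univ, HasFDerivAt (fun z => π i * F i z)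
        ((InnerProductSpace.toDual ℝ _) (π i • gradient (F i) x)) x := by
      intro i _
      have := (hdiff i x).hasGradientAt.hasFDerivAt.fun_const_smul (π i)
      simpa [smul_eq_mul, map_smul] using this
    simpa using HasFDerivAt.fun_sum this
  exact h.gradient

lemma sq_norm_sum_le (N : ℕ) {E : Type*} [NormedAddCommGroup E] [InnerProductSpace ℝ E]
    (π : Fin N → ℝ) (hπ : ∀ i, 0 ≤ π i) (hπ1 : ∑ i, π i = 1) (v : Fin N → E) :
    ‖∑ i, π i • v i‖ ^ 2 ≤ ∑ i, π i * ‖v i‖ ^ 2 := by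
  have h1 : ‖∑ i, π i • v i‖ ≤ ∑ i, π i * ‖v i‖ := by
    refine (norm_sum_le _ _).trans_eq ?_
    simp [norm_smul, abs_of_nonneg (hπ _)]
  have h1' : 0 ≤ ∑ i, π i * ‖v i‖ :=
    Finset.sum_nonneg fun i _ => mul_nonneg (hπ i) (norm_nonneg _)
  calc ‖∑ i, π i • v i‖ ^ 2 ≤ (∑ i, π i * ‖v i‖) ^ 2 :=
        pow_le_pow_left₀ (norm_nonneg _) h1 2
    _ = (∑ i, Real.sqrt (π i) * (Real.sqrt (π i) * ‖v i‖)) ^ 2 := by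
        congr 1; refine Finset.sum_congr rfl fun i _ => ?_
        rw [← mul_assoc, Real.mul_self_sqrt (hπ i)]
    _ ≤ (∑ i, Real.sqrt (π i) ^ 2) * ∑ i, (Real.sqrt (π i) * ‖v i‖) ^ 2 :=
        Finset.sum_mul_sq_le_sq_mul_sq _ _ _
    _ = ∑ i, π i * ‖v i‖ ^ 2 := by
        rw [Finset.sum_congr rfl fun i _ => Real.sq_sqrt (hπ i), hπ1, one_mul]
        refine Finset.sum_congr rfl fun i _ => ?_
        rw [mul_pow, Real.sq_sqrt (hπ i)]

theorem stmt_2 (d N : ℕ) (L : ℝ)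
    (F : Fin N → EuclideanSpace ℝ (Fin d) → ℝ)
    (π : Fin N → ℝ) (hπ : ∀ i, 0 ≤ π i) (hπ1 : ∑ i, π i = 1)
    (hdiff : ∀ i, Differentiable ℝ (F i))
    (hlip : ∀ i x y, ‖gradient (F i) x - gradient (F i) y‖ ≤ L * ‖x - y‖)
    (wbar : EuclideanSpace ℝ (Fin d)) (w : Fin N → EuclideanSpace ℝ (Fin d)) :
    ⟪gradient (fun z => ∑ i, π i * F i z) wbar, -∑ i, π i • gradient (F i) (w i)⟫
      ≤ -(1 / 2) * ‖gradient (fun z => ∑ i, π i * F i z) wbar‖ ^ 2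
        - (1 / 2) * ‖∑ i, π i • gradient (F i) (w i)‖ ^ 2
        + (L ^ 2 / 2) * ∑ i, π i * ‖wbar - w i‖ ^ 2 := by
  set a := gradient (fun z => ∑ i, π i * F i z) wbar with ha
  set b := ∑ i, π i • gradient (F i) (w i) with hb
  have hab : a - b = ∑ i, π i • (gradient (F i) wbar - gradient (F i) (w i)) := by
    rw [ha, hb, grad_weighted_sum d N F π hdiff, ← Finset.sum_sub_distrib]
    exact Finset.sum_congr rfl fun i _ => (smul_sub _ _ _).symm
  have key : ‖a - b‖ ^ 2 ≤ L ^ 2 * ∑ i, π i * ‖wbar - w i‖ ^ 2 := by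
    rw [hab, Finset.mul_sum]
    refine (sq_norm_sum_le N π hπ hπ1 _).trans (Finset.sum_le_sum fun i _ => ?_)
    rw [← mul_assoc, mul_comm (L^2), mul_assoc]
    refine mul_le_mul_of_nonneg_left ?_ (hπ i)
    calc ‖gradient (F i) wbar - gradient (F i) (w i)‖ ^ 2
        ≤ (L * ‖wbar - w i‖) ^ 2 := by
          have := hlip i wbar (w i)
          exact pow_le_pow_left₀ (norm_nonneg _) this 2
      _ = L ^ 2 * ‖wbar - w i‖ ^ 2 := by ring
  have hid : ⟪a, -b⟫ = -(1/2) * ‖a‖^2 - (1/2) * ‖b‖^2 + (1/2) * ‖a - b‖^2 := by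
    rw [inner_neg_right]
    have := @norm_sub_sq_real (EuclideanSpace ℝ (Fin d)) _ _ a b
    linarith [this]
  rw [hid]
  linarith [key]
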